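/- Let 0 < δ < 1 with 1/δ ∈ ℕ, z ∈ ℤ², ρ ∈ Γ, and let 1 < p < ∞ with p' ∈ ℕ. Let w be a weight with [w]_{A^S_{p,ρ,z}} < ∞, and assume the side selection has the overlap property that each ℓ_i meets at most A·δ^{−5/4} of the sets ℓ_1,…,ℓ_u (as is guaranteed, with A an absolute constant, by the face-selection algorithm). Restrict to the indices i (say v of them, relabeled 1,…,v) whose selected side is vertical. Then for every choice of nonnegative numbers b_1,…,b_v with Σ_{i=1}^v b_i^{p'} = 1, setting t_i = (b_i/|ℓ_i|)·(∫_{Q_z(i)} w dx)^{1/p}, one has ‖Σ_{i=1}^v t_i·1_{ℓ_i}‖_{L^{p'}(7Q_z, w^{1−p'})} ≤ C·δ^{−5/(4p)}·[w]_{A^S_{p,ρ,z}}^{1/p}, where C depends only on A and p. -/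

import Mathlib

open MeasureTheory Metric Set
open scoped ENNReal NNReal

noncomputable section

/-- Index of a `k`-face of an axis-parallel cube in `ℝⁿ`: a set of `k` "free" coordinates
together with a sign choice for the remaining coordinates (only the signs of coordinates
outside the free set matter). -/
abbrev FaceIdx (n k : ℕ) := {T : Finset (Fin n) // T.card = k} × (Fin n → Bool)

/-- The `k`-face of the axis-parallel cube centered at `x` with side length `2 r`
corresponding to the face index `F`. -/
def kFace {n : ℕ} (k : ℕ) (x : Fin n → ℝ) (r : ℝ) (F : FaceIdx n k) : Set (Fin n → ℝ) :=
  {y | (∀ i ∈ F.1.1, |y i - x i| ≤ r) ∧ ∀ i ∉ F.1.1, y i = x i + (if F.2 i then r else -r)}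

/-- The `δ`-neighborhood of a `k`-face. -/
def faceNbhd {n : ℕ} (k : ℕ) (δ : ℝ) (x : Fin n → ℝ) (r : ℝ) (F : FaceIdx n k) :
    Set (Fin n → ℝ) :=
  Metric.cthickening δ (kFace k x r F)

/-- The `δ`-neighborhood of the whole `k`-skeleton. -/
def skelNbhd {n : ℕ} (k : ℕ) (δ : ℝ) (x : Fin n → ℝ) (r : ℝ) : Set (Fin n → ℝ) :=
  ⋃ F : FaceIdx n k, faceNbhd k δ x r F

/-- The `k`-skeleton maximal function with width `δ` (with values in `ℝ≥0∞`):
`M^k_δ f (x) = sup_{1 ≤ r ≤ 2} min_j ⨍_{S^j_{k,δ}(x,r)} |f|`. -/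
def skelMax (n k : ℕ) (δ : ℝ) (f : (Fin n → ℝ) → ℝ) (x : Fin n → ℝ) : ℝ≥0∞ :=
  ⨆ r ∈ Set.Icc (1 : ℝ) 2, ⨅ F : FaceIdx n k,
    (volume (faceNbhd k δ x r F))⁻¹ * ∫⁻ y in faceNbhd k δ x r F, (‖f y‖₊ : ℝ≥0∞)

/-- `L^p` norm of an `ℝ≥0∞`-valued function. -/
def lpNormE {α : Type*} [MeasurableSpace α] (g : α → ℝ≥0∞) (p : ℝ) (μ : Measure α) : ℝ≥0∞ :=
  (∫⁻ x, g x ^ p ∂μ) ^ (1 / p)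

/-- The measure `w(x) dx` associated to a weight `w`. -/
def wMeasure {n : ℕ} (w : (Fin n → ℝ) → ℝ) : Measure (Fin n → ℝ) :=
  volume.withDensity fun x => ENNReal.ofReal (w x)

/-- Average of `g` over the set `A` (with respect to Lebesgue measure). -/
def ravg {n : ℕ} (A : Set (Fin n → ℝ)) (g : (Fin n → ℝ) → ℝ) : ℝ :=
  (volume A).toReal⁻¹ * ∫ y in A, g y

/-- The axis-parallel cube with center `c` and side length `s`. -/
def cube {n : ℕ} (c : Fin n → ℝ) (s : ℝ) : Set (Fin n → ℝ) :=
  {y | ∀ j, |y j - c j| ≤ s / 2}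

/-- The closed unit cube `Q_z` with lower-left vertex `z`. -/
def unitCube {n : ℕ} (z : Fin n → ℤ) : Set (Fin n → ℝ) :=
  {y | ∀ j, (z j : ℝ) ≤ y j ∧ y j ≤ (z j : ℝ) + 1}

/-- The cube `7 Q_z`: same center as `Q_z`, side length `7`. -/
def sevenCube {n : ℕ} (z : Fin n → ℤ) : Set (Fin n → ℝ) :=
  {y | ∀ j, |y j - ((z j : ℝ) + 1 / 2)| ≤ 7 / 2}

/-- The (half-open) grid cell `Q_z(m)` of side length `δ = 1/N` inside `Q_z`. -/
def gridCell {n : ℕ} (N : ℕ) (z : Fin n → ℤ) (m : Fin n → Fin N) : Set (Fin n → ℝ) :=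
  {y | ∀ j, (z j : ℝ) + (m j : ℝ) / N ≤ y j ∧ y j < (z j : ℝ) + ((m j : ℝ) + 1) / N}

/-- The center `x_m` of the grid cell `Q_z(m)`. -/
def gridCenter {n : ℕ} (N : ℕ) (z : Fin n → ℤ) (m : Fin n → Fin N) : Fin n → ℝ :=
  fun j => (z j : ℝ) + ((m j : ℝ) + 1 / 2) / N

/-- Membership in `Γ`: a radius function with values in `[1,2] ∩ δ ℤ`, `δ = 1/N`. -/
def inGamma {n : ℕ} (N : ℕ) (ρ : (Fin n → Fin N) → ℝ) : Prop :=
  ∀ m, ρ m ∈ Set.Icc (1 : ℝ) 2 ∧ ∃ t : ℤ, ρ m = (t : ℝ) / N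

/-- The `δ'`-neighborhood `ℓ_m` of the selected `k`-face of the skeleton
`S_k(x_m, ρ(x_m))`. -/
def selFace {n : ℕ} (k N : ℕ) (z : Fin n → ℤ) (ρ : (Fin n → Fin N) → ℝ)
    (sel : (Fin n → Fin N) → FaceIdx n k) (δ' : ℝ) (m : Fin n → Fin N) : Set (Fin n → ℝ) :=
  Metric.cthickening δ' (kFace k (gridCenter N z m) (ρ m) (sel m))

/-- The linearized `k`-skeleton maximal operator: on the cell `Q_z(m)` it equals the
average of `f` over the `δ'`-neighborhood of the selected face. -/
def linMax {n : ℕ} (k N : ℕ) (z : Fin n → ℤ) (ρ : (Fin n → Fin N) → ℝ)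
    (sel : (Fin n → Fin N) → FaceIdx n k) (δ' : ℝ) (f : (Fin n → ℝ) → ℝ)
    (x : Fin n → ℝ) : ℝ :=
  ∑ m : Fin n → Fin N, Set.indicator (gridCell N z m)
    (fun _ => (volume (selFace k N z ρ sel δ' m)).toReal⁻¹ *
      ∫ y in selFace k N z ρ sel δ' m, f y) x

/-- The local skeleton `A_p` constant `[w]_{A^{S_k}_{p,ρ,z}}` (for `1 < p < ∞`). -/
def ApLoc {n : ℕ} (k N : ℕ) (z : Fin n → ℤ) (ρ : (Fin n → Fin N) → ℝ)
    (sel : (Fin n → Fin N) → FaceIdx n k) (w : (Fin n → ℝ) → ℝ) (p : ℝ) : ℝ≥0∞ :=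
  ⨆ m : Fin n → Fin N,
    ((volume (selFace k N z ρ sel ((N : ℝ)⁻¹) m))⁻¹ *
        ∫⁻ y in gridCell N z m, ENNReal.ofReal (w y)) *
      ((volume (selFace k N z ρ sel ((N : ℝ)⁻¹) m))⁻¹ *
        ∫⁻ y in selFace k N z ρ sel ((N : ℝ)⁻¹) m,
          ENNReal.ofReal (w y) ^ (1 - p / (p - 1))) ^ (p - 1)

/-- The local skeleton `A_1` constant `[w]_{A^{S_k}_{1,ρ,z}}`. -/
def A1Loc {n : ℕ} (k N : ℕ) (z : Fin n → ℤ) (ρ : (Fin n → Fin N) → ℝ)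
    (sel : (Fin n → Fin N) → FaceIdx n k) (w : (Fin n → ℝ) → ℝ) : ℝ≥0∞ :=
  ⨆ m : Fin n → Fin N,
    ((volume (selFace k N z ρ sel ((N : ℝ)⁻¹) m))⁻¹ *
        ∫⁻ y in gridCell N z m, ENNReal.ofReal (w y)) *
      essSup (fun y => (ENNReal.ofReal (w y))⁻¹)
        (volume.restrict (selFace k N z ρ sel ((N : ℝ)⁻¹) m))

/-- The global skeleton `A_p` constant `[w]_{A^{S_k}_p}` (with the `A_1` version at `p = 1`). -/
def ApGlobal {n : ℕ} (k N : ℕ)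
    (sel : (Fin n → ℤ) → ((Fin n → Fin N) → ℝ) → (Fin n → Fin N) → FaceIdx n k)
    (w : (Fin n → ℝ) → ℝ) (p : ℝ) : ℝ≥0∞ :=
  if p = 1 then
    ⨆ z : Fin n → ℤ, ⨆ ρ : {ρ : (Fin n → Fin N) → ℝ // inGamma N ρ},
      A1Loc k N z ρ.1 (sel z ρ.1) w
  else
    ⨆ z : Fin n → ℤ, ⨆ ρ : {ρ : (Fin n → Fin N) → ℝ // inGamma N ρ},
      ApLoc k N z ρ.1 (sel z ρ.1) w p

lemma kFace_subset_closedBall {n : ℕ} (k : ℕ) (x : Fin n → ℝ) {r : ℝ} (hr : 0 ≤ r)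
    (F : FaceIdx n k) : kFace k x r F ⊆ Metric.closedBall x r := by
  intro y hy
  rw [Metric.mem_closedBall, dist_pi_le_iff hr]
  intro j
  rw [Real.dist_eq]
  by_cases hj : j ∈ F.1.1
  · exact hy.1 j hj
  · rw [hy.2 j hj, add_sub_cancel_left]
    split_ifs
    · rw [abs_of_nonneg hr]
    · rw [abs_neg, abs_of_nonneg hr]

lemma kFace_nonempty {n : ℕ} (k : ℕ) (x : Fin n → ℝ) {r : ℝ} (hr : 0 ≤ r)
    (F : FaceIdx n k) : (kFace k x r F).Nonempty := by
  refine ⟨fun j => if j ∈ F.1.1 then x j else x j + (if F.2 j then r else -r), fun j hj => ?_,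
    fun j hj => ?_⟩
  · simp [if_pos hj, hr]
  · simp [if_neg hj]

lemma sevenCube_eq (z : Fin 2 → ℤ) :
    sevenCube z = Metric.closedBall (fun j => (z j : ℝ) + 1 / 2) (7 / 2) := by
  ext y
  simp only [sevenCube, Set.mem_setOf_eq, Metric.mem_closedBall]
  rw [dist_pi_le_iff (by norm_num)]
  simp [Real.dist_eq]

lemma gridCenter_dist (N : ℕ) (hN : 0 < N) (z : Fin 2 → ℤ) (m : Fin 2 → Fin N) (j : Fin 2) :
    |gridCenter N z m j - ((z j : ℝ) + 1 / 2)| ≤ 1 / 2 := by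
  have hN0 : (0:ℝ) < N := by exact_mod_cast hN
  have h2 : ((m j : ℕ) : ℝ) + 1 ≤ N := by exact_mod_cast (m j).is_lt
  have h1 : (0:ℝ) ≤ ((m j : ℕ) : ℝ) := Nat.cast_nonneg _
  have ht0 : (0:ℝ) ≤ (((m j : ℕ) : ℝ) + 1 / 2) / N := by positivity
  have ht1 : (((m j : ℕ) : ℝ) + 1 / 2) / N ≤ 1 := by
    rw [div_le_one hN0]; linarith
  simp only [gridCenter]
  rw [abs_le]
  constructor <;> linarith

lemma selFace_subset_sevenCube {N : ℕ} (hN : 1 < N) (z : Fin 2 → ℤ)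
    {ρ : (Fin 2 → Fin N) → ℝ} (hρ : inGamma N ρ) (sel : (Fin 2 → Fin N) → FaceIdx 2 1)
    (m : Fin 2 → Fin N) : selFace 1 N z ρ sel ((N:ℝ)⁻¹) m ⊆ sevenCube z := by
  have hN0 : (0:ℝ) < N := by exact_mod_cast Nat.lt_of_lt_of_le Nat.zero_lt_one hN.le
  have hδ0 : (0:ℝ) ≤ (N:ℝ)⁻¹ := by positivity
  have hδ2 : (N:ℝ)⁻¹ ≤ 1 / 2 := by
    rw [inv_le_comm₀ hN0 (by norm_num)]
    norm_num
    exact_mod_cast hN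
  have hr1 : (1:ℝ) ≤ ρ m := (hρ m).1.1
  have hr2 : ρ m ≤ 2 := (hρ m).1.2
  have h1 : selFace 1 N z ρ sel ((N:ℝ)⁻¹) m ⊆
      Metric.closedBall (gridCenter N z m) ((N:ℝ)⁻¹ + ρ m) := by
    refine subset_trans (Metric.cthickening_subset_of_subset _
      (kFace_subset_closedBall 1 _ (by linarith) (sel m))) ?_
    rw [cthickening_closedBall hδ0 (by linarith : (0:ℝ) ≤ ρ m)]
  intro y hy
  have hy' := h1 hy
  rw [Metric.mem_closedBall] at hy'
  rw [sevenCube_eq, Metric.mem_closedBall, dist_pi_le_iff (by norm_num)]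
  intro j
  have hj := le_trans (dist_le_pi_dist y (gridCenter N z m) j) hy'
  have hg := gridCenter_dist N (Nat.lt_of_lt_of_le Nat.zero_lt_one hN.le) z m j
  rw [Real.dist_eq] at hj ⊢
  have htri : |y j - ((z j : ℝ) + 1 / 2)| ≤
      |y j - gridCenter N z m j| + |gridCenter N z m j - ((z j : ℝ) + 1 / 2)| := by
    have := abs_sub_le (y j) (gridCenter N z m j) ((z j : ℝ) + 1 / 2)
    linarith
  linarith

lemma selFace_measurableSet {n : ℕ} (k N : ℕ) (z : Fin n → ℤ) (ρ : (Fin n → Fin N) → ℝ)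
    (sel : (Fin n → Fin N) → FaceIdx n k) (δ' : ℝ) (m : Fin n → Fin N) :
    MeasurableSet (selFace k N z ρ sel δ' m) :=
  Metric.isClosed_cthickening.measurableSet

lemma selFace_volume_pos {N : ℕ} (hN : 1 < N) (z : Fin 2 → ℤ)
    {ρ : (Fin 2 → Fin N) → ℝ} (hρ : inGamma N ρ) (sel : (Fin 2 → Fin N) → FaceIdx 2 1)
    (m : Fin 2 → Fin N) : 0 < volume (selFace 1 N z ρ sel ((N:ℝ)⁻¹) m) := by
  have hr0 : (0:ℝ) ≤ ρ m := le_trans zero_le_one (hρ m).1.1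
  obtain ⟨pt, hpt⟩ := kFace_nonempty 1 (gridCenter N z m) hr0 (sel m)
  have hsub : Metric.closedBall pt ((N:ℝ)⁻¹) ⊆ selFace 1 N z ρ sel ((N:ℝ)⁻¹) m :=
    Metric.closedBall_subset_cthickening hpt _
  have hN0 : (0:ℝ) < (N:ℝ)⁻¹ := by
    have : (0:ℝ) < N := by exact_mod_cast Nat.lt_of_lt_of_le Nat.zero_lt_one hN.le
    positivity
  exact lt_of_lt_of_le (Metric.measure_closedBall_pos volume pt hN0) (measure_mono hsub)

lemma selFace_volume_lt_top {N : ℕ} (hN : 1 < N) (z : Fin 2 → ℤ)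
    {ρ : (Fin 2 → Fin N) → ℝ} (hρ : inGamma N ρ) (sel : (Fin 2 → Fin N) → FaceIdx 2 1)
    (m : Fin 2 → Fin N) : volume (selFace 1 N z ρ sel ((N:ℝ)⁻¹) m) < ⊤ := by
  refine lt_of_le_of_lt (measure_mono (selFace_subset_sevenCube hN z hρ sel m)) ?_
  rw [sevenCube_eq]
  exact measure_closedBall_lt_top

/-- the key `L^{p'}(7Q_z, w^{1-p'})` estimate for sums of indicators of the
selected vertical fattened sides, given the `A δ^{-5/4}` overlap property of the selection
and `[w]_{A^S_{p,ρ,z}} < ∞`, with constant `C` depending only on `A` and `p`. -/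
theorem indicator_sum_estimate (p : ℝ) (hp : 1 < p) (hp' : ∃ m : ℕ, p / (p - 1) = (m : ℝ))
    (A : ℝ) (hA : 0 < A) :
    ∃ C : ℝ, 0 < C ∧
      ∀ (N : ℕ), 1 < N → ∀ (δ : ℝ), δ = (N : ℝ)⁻¹ →
      ∀ (z : Fin 2 → ℤ) (ρ : (Fin 2 → Fin N) → ℝ), inGamma N ρ →
      ∀ sel : (Fin 2 → Fin N) → FaceIdx 2 1,
      (∀ m, ({m' : Fin 2 → Fin N |
          (selFace 1 N z ρ sel δ m ∩ selFace 1 N z ρ sel δ m').Nonempty}.ncard : ℝ) ≤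
        A * δ ^ (-(5 : ℝ) / 4)) →
      ∀ w : (Fin 2 → ℝ) → ℝ, (∀ x, 0 ≤ w x) → LocallyIntegrable w volume →
      ApLoc 1 N z ρ sel w p ≠ ⊤ →
      ∀ b : (Fin 2 → Fin N) → ℝ, (∀ m, 0 ≤ b m) →
      (∑ m ∈ Finset.univ.filter (fun m => (sel m).1.1 = ({1} : Finset (Fin 2))),
          b m ^ (p / (p - 1)) = 1) →
      eLpNorm
        (fun y => ∑ m ∈ Finset.univ.filter (fun m => (sel m).1.1 = ({1} : Finset (Fin 2))),
          b m / (volume (selFace 1 N z ρ sel δ m)).toReal *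
            (∫ x in gridCell N z m, w x) ^ (1 / p) *
            Set.indicator (selFace 1 N z ρ sel δ m) (fun _ => (1 : ℝ)) y)
        (ENNReal.ofReal (p / (p - 1)))
        ((volume.withDensity fun y => ENNReal.ofReal (w y) ^ (1 - p / (p - 1))).restrict
          (sevenCube z)) ≤
        ENNReal.ofReal (C * δ ^ (-(5 : ℝ) / (4 * p))) * ApLoc 1 N z ρ sel w p ^ (1 / p) := by
  classical
  have hp0 : (0:ℝ) < p := lt_trans one_pos hp
  have hp1 : (0:ℝ) < p - 1 := by linarith
  set q : ℝ := p / (p - 1) with hqdef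
  have hq1 : 1 < q := by rw [hqdef, lt_div_iff₀ hp1]; linarith
  have hq0 : 0 < q := lt_trans one_pos hq1
  obtain ⟨n0, hn0⟩ := hp'
  have hn0pos : 0 < n0 := by
    rcases Nat.eq_zero_or_pos n0 with h | h
    · exfalso; rw [h] at hn0; norm_num at hn0; linarith
    · exact h
  obtain ⟨k, rfl⟩ : ∃ k, n0 = k + 1 := ⟨n0 - 1, (Nat.succ_pred_eq_of_pos hn0pos).symm⟩
  have hqn : q = ((k:ℝ) + 1) := by rw [hn0]; push_cast; ring
  have hkr : (k : ℝ) = 1 / (p - 1) := by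
    have h1 : (k:ℝ) = q - 1 := by linarith [hqn]
    rw [h1, hqdef]
    field_simp
    ring
  set r : ℝ := 1 / (p - 1) with hrdef
  have hr0 : 0 < r := by positivity
  have hrq : r * (p - 1) = 1 := by rw [hrdef]; field_simp
  have hqr : q = r + 1 := by rw [hqdef, hrdef]; field_simp; ring
  have hpq : (1 / p) * q = r := by rw [hqdef, hrdef]; field_simp
  refine ⟨A ^ (1 / p), Real.rpow_pos_of_pos hA _, ?_⟩
  intro N hN δ hδ z ρ hρ sel hsel w hw hwloc hApfin b hb hbsum
  subst hδ
  have hN0 : (0:ℝ) < N := by exact_mod_cast Nat.lt_of_lt_of_le Nat.zero_lt_one hN.le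
  have hδpos : (0:ℝ) < (N:ℝ)⁻¹ := by positivity
  set S : Finset (Fin 2 → Fin N) :=
    Finset.univ.filter (fun m => (sel m).1.1 = ({1} : Finset (Fin 2))) with hSdef
  set ℓ : (Fin 2 → Fin N) → Set (Fin 2 → ℝ) := fun m => selFace 1 N z ρ sel ((N:ℝ)⁻¹) m
    with hℓdef
  set 𝔄 : ℝ≥0∞ := ApLoc 1 N z ρ sel w p with h𝔄def
  set K : ℝ := A * ((N:ℝ)⁻¹) ^ (-(5:ℝ) / 4) with hKdef
  have hK0 : 0 < K := by
    rw [hKdef]; positivity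
  set c : (Fin 2 → Fin N) → ℝ := fun m =>
    b m / (volume (ℓ m)).toReal * (∫ x in gridCell N z m, w x) ^ (1 / p) with hcdef
  have hI0 : ∀ m, (0:ℝ) ≤ ∫ x in gridCell N z m, w x := fun m =>
    integral_nonneg fun x => hw x
  have hc0 : ∀ m, 0 ≤ c m := by
    intro m
    apply mul_nonneg
    · exact div_nonneg (hb m) ENNReal.toReal_nonneg
    · exact Real.rpow_nonneg (hI0 m) _
  have hmeasℓ : ∀ m, MeasurableSet (ℓ m) := fun m => selFace_measurableSet 1 N z ρ sel _ m
  have hsub7 : ∀ m, ℓ m ⊆ sevenCube z := fun m => selFace_subset_sevenCube hN z hρ sel m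
  have hV0 : ∀ m, volume (ℓ m) ≠ 0 := fun m => (selFace_volume_pos hN z hρ sel m).ne'
  have hVt : ∀ m, volume (ℓ m) ≠ ⊤ := fun m => (selFace_volume_lt_top hN z hρ sel m).ne
  set μ : Measure (Fin 2 → ℝ) :=
    (volume.withDensity fun y => ENNReal.ofReal (w y) ^ (1 - q)).restrict (sevenCube z)
    with hμdef
  set F : (Fin 2 → ℝ) → ℝ := fun y =>
    ∑ m ∈ S, c m * Set.indicator (ℓ m) (fun _ => (1 : ℝ)) y with hFdef
  -- rewrite the eLpNorm
  have hqne : ENNReal.ofReal q ≠ 0 := (ENNReal.ofReal_pos.mpr hq0).ne'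
  rw [eLpNorm_eq_lintegral_rpow_enorm_toReal hqne ENNReal.ofReal_ne_top,
    ENNReal.toReal_ofReal hq0.le]
  set R : ℝ≥0∞ := ENNReal.ofReal (A ^ (1 / p) * ((N:ℝ)⁻¹) ^ (-(5:ℝ) / (4 * p))) * 𝔄 ^ (1 / p)
    with hRdef
  suffices hmain : ∫⁻ y, (‖F y‖₊ : ℝ≥0∞) ^ q ∂μ ≤ R ^ q by
    calc (∫⁻ y, (‖F y‖₊ : ℝ≥0∞) ^ q ∂μ) ^ (1 / q)
        ≤ (R ^ q) ^ (1 / q) := ENNReal.rpow_le_rpow hmain (by positivity)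
      _ = R := by
          rw [← ENNReal.rpow_mul, mul_one_div, div_self hq0.ne', ENNReal.rpow_one]
  -- pointwise bound
  have hptwise : ∀ y, (‖F y‖₊ : ℝ≥0∞) ^ q ≤
      ENNReal.ofReal K ^ k * ∑ m ∈ S,
        Set.indicator (ℓ m) (fun _ => ENNReal.ofReal (c m ^ (k + 1))) y := by
    intro y
    have hFy : F y = ∑ m ∈ S.filter (fun m => y ∈ ℓ m), c m := by
      rw [Finset.sum_filter, hFdef]
      refine Finset.sum_congr rfl fun m _ => ?_
      by_cases hy : y ∈ ℓ m <;> simp [Set.indicator_apply, hy]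
    have hF0 : 0 ≤ F y := by
      rw [hFy]; exact Finset.sum_nonneg fun m _ => hc0 m
    have hcard : ((S.filter (fun m => y ∈ ℓ m)).card : ℝ) ≤ K := by
      rcases (S.filter (fun m => y ∈ ℓ m)).eq_empty_or_nonempty with he | ⟨m0, hm0⟩
      · rw [he]; simpa using hK0.le
      · have hsub : (↑(S.filter (fun m => y ∈ ℓ m)) : Set (Fin 2 → Fin N)) ⊆
            {m' | (ℓ m0 ∩ ℓ m').Nonempty} := by
          intro m hm
          simp only [Finset.coe_filter, Set.mem_setOf_eq, Finset.mem_coe] at hm ⊢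
          exact ⟨y, (Finset.mem_filter.mp hm0).2, hm.2⟩
        calc ((S.filter (fun m => y ∈ ℓ m)).card : ℝ)
            = ((↑(S.filter (fun m => y ∈ ℓ m)) : Set (Fin 2 → Fin N)).ncard : ℝ) := by
              rw [Set.ncard_coe_finset]
          _ ≤ ({m' | (ℓ m0 ∩ ℓ m').Nonempty}.ncard : ℝ) := by
              exact_mod_cast Set.ncard_le_ncard hsub (Set.toFinite _)
          _ ≤ K := hsel m0
    have hreal : (F y) ^ (k + 1) ≤ K ^ k *
        ∑ m ∈ S, c m ^ (k + 1) * Set.indicator (ℓ m) (fun _ => (1:ℝ)) y := by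
      have h1 : (F y) ^ (k + 1) ≤ ((S.filter (fun m => y ∈ ℓ m)).card : ℝ) ^ k *
          ∑ m ∈ S.filter (fun m => y ∈ ℓ m), c m ^ (k + 1) := by
        rw [hFy]
        exact pow_sum_le_card_mul_sum_pow (fun m _ => hc0 m) k
      have h2 : ∑ m ∈ S.filter (fun m => y ∈ ℓ m), c m ^ (k + 1) =
          ∑ m ∈ S, c m ^ (k + 1) * Set.indicator (ℓ m) (fun _ => (1:ℝ)) y := by
        rw [Finset.sum_filter]
        refine Finset.sum_congr rfl fun m _ => ?_
        by_cases hy : y ∈ ℓ m <;> simp [Set.indicator_apply, hy]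
      rw [← h2]
      refine le_trans h1 ?_
      have hsumnn : (0:ℝ) ≤ ∑ m ∈ S.filter (fun m => y ∈ ℓ m), c m ^ (k + 1) :=
        Finset.sum_nonneg fun m _ => pow_nonneg (hc0 m) _
      exact mul_le_mul_of_nonneg_right (pow_le_pow_left₀ (Nat.cast_nonneg _) hcard k) hsumnn
    calc (‖F y‖₊ : ℝ≥0∞) ^ q = ENNReal.ofReal (F y) ^ q := by
          rw [← enorm_eq_nnnorm, Real.enorm_eq_ofReal hF0]
      _ = ENNReal.ofReal ((F y) ^ (k + 1)) := by
          rw [ENNReal.ofReal_pow hF0, ← ENNReal.rpow_natCast (ENNReal.ofReal (F y)) (k + 1),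
            hqn]
          congr 1
          push_cast
          ring
      _ ≤ ENNReal.ofReal (K ^ k *
            ∑ m ∈ S, c m ^ (k + 1) * Set.indicator (ℓ m) (fun _ => (1:ℝ)) y) :=
          ENNReal.ofReal_le_ofReal hreal
      _ = ENNReal.ofReal K ^ k * ∑ m ∈ S,
            Set.indicator (ℓ m) (fun _ => ENNReal.ofReal (c m ^ (k + 1))) y := by
          rw [ENNReal.ofReal_mul (by positivity), ENNReal.ofReal_pow hK0.le,
            ENNReal.ofReal_sum_of_nonneg (fun m _ => ?_)]
          · congr 1
            refine Finset.sum_congr rfl fun m _ => ?_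
            by_cases hy : y ∈ ℓ m <;> simp [Set.indicator_apply, hy]
          · exact mul_nonneg (pow_nonneg (hc0 m) _) (Set.indicator_nonneg (fun _ _ => one_pos.le) _)
  -- integrate the pointwise bound
  have hμℓ : ∀ m, μ (ℓ m) = ∫⁻ y in ℓ m, ENNReal.ofReal (w y) ^ (1 - q) := by
    intro m
    rw [hμdef, Measure.restrict_apply (hmeasℓ m),
      Set.inter_eq_self_of_subset_left (hsub7 m), withDensity_apply _ (hmeasℓ m)]
  have hint : ∫⁻ y, (‖F y‖₊ : ℝ≥0∞) ^ q ∂μ ≤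
      ENNReal.ofReal K ^ k * ∑ m ∈ S, ENNReal.ofReal (c m ^ (k + 1)) *
        ∫⁻ y in ℓ m, ENNReal.ofReal (w y) ^ (1 - q) := by
    refine le_trans (lintegral_mono hptwise) ?_
    rw [lintegral_const_mul' _ _ (ENNReal.pow_ne_top ENNReal.ofReal_ne_top)]
    refine mul_le_mul_right (le_of_eq ?_) _
    rw [lintegral_finset_sum _ (fun m _ => (measurable_const.indicator (hmeasℓ m)))]
    refine Finset.sum_congr rfl fun m _ => ?_
    rw [lintegral_indicator (hmeasℓ m), setLIntegral_const, ← hμℓ m]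
  refine le_trans hint ?_
  -- per-term estimate
  have hterm : ∀ m ∈ S, ENNReal.ofReal (c m ^ (k + 1)) *
      (∫⁻ y in ℓ m, ENNReal.ofReal (w y) ^ (1 - q)) ≤
      ENNReal.ofReal (b m ^ (k + 1)) * 𝔄 ^ r := by
    intro m _
    set V : ℝ≥0∞ := volume (ℓ m) with hVdef
    set L : ℝ≥0∞ := ∫⁻ y in ℓ m, ENNReal.ofReal (w y) ^ (1 - q) with hLdef
    set W : ℝ≥0∞ := ∫⁻ y in gridCell N z m, ENNReal.ofReal (w y) with hWdef
    have hVinv0 : V⁻¹ ≠ 0 := ENNReal.inv_ne_zero.mpr (hVt m)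
    have hVinvt : V⁻¹ ≠ ⊤ := ENNReal.inv_ne_top.mpr (hV0 m)
    have hgridsub : gridCell N z m ⊆ Metric.closedBall (fun j => (z j : ℝ)) 2 := by
      intro y hy
      rw [Metric.mem_closedBall, dist_pi_le_iff (by norm_num)]
      intro j
      have h1 := (hy j).1
      have h2 := (hy j).2
      have hm1 : (0:ℝ) ≤ ((m j : ℕ) : ℝ) := Nat.cast_nonneg _
      have hm2 : ((m j : ℕ) : ℝ) + 1 ≤ N := by exact_mod_cast (m j).is_lt
      have ha : (0:ℝ) ≤ ((m j : ℕ) : ℝ) / N := by positivity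
      have hbd : (((m j : ℕ) : ℝ) + 1) / N ≤ 1 := by rw [div_le_one hN0]; linarith
      rw [Real.dist_eq, abs_le]
      constructor <;> nlinarith
    have hwint : IntegrableOn w (gridCell N z m) volume :=
      (hwloc.integrableOn_isCompact (isCompact_closedBall _ _)).mono_set hgridsub
    have hIW : ENNReal.ofReal (∫ x in gridCell N z m, w x) = W := by
      rw [hWdef, MeasureTheory.ofReal_integral_eq_lintegral_ofReal hwint
        (Filter.Eventually.of_forall fun x => hw x)]
    have hWt : W ≠ ⊤ := by rw [← hIW]; exact ENNReal.ofReal_ne_top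
    have hApm : (V⁻¹ * W) * (V⁻¹ * L) ^ (p - 1) ≤ 𝔄 := by
      rw [h𝔄def, ApLoc]
      exact le_iSup (fun m' => ((volume (selFace 1 N z ρ sel ((N:ℝ)⁻¹) m'))⁻¹ *
        ∫⁻ y in gridCell N z m', ENNReal.ofReal (w y)) *
        ((volume (selFace 1 N z ρ sel ((N:ℝ)⁻¹) m'))⁻¹ *
          ∫⁻ y in selFace 1 N z ρ sel ((N:ℝ)⁻¹) m',
            ENNReal.ofReal (w y) ^ (1 - q)) ^ (p - 1)) m
    have hkey : (V⁻¹) ^ (k + 1) * (W ^ r * L) ≤ 𝔄 ^ r := by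
      have h1 : ((V⁻¹ * W) * (V⁻¹ * L) ^ (p - 1)) ^ r ≤ 𝔄 ^ r :=
        ENNReal.rpow_le_rpow hApm hr0.le
      have h2 : ((V⁻¹ * W) * (V⁻¹ * L) ^ (p - 1)) ^ r =
          (V⁻¹) ^ r * W ^ r * (V⁻¹ * L) := by
        rw [ENNReal.mul_rpow_of_nonneg _ _ hr0.le, ENNReal.mul_rpow_of_nonneg _ _ hr0.le,
          ← ENNReal.rpow_mul]
        have : (p - 1) * r = 1 := by rw [mul_comm]; exact hrq
        rw [this, ENNReal.rpow_one]
      have h3 : (V⁻¹) ^ (k + 1) = (V⁻¹) ^ r * V⁻¹ := by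
        have : ((V⁻¹) ^ (k + 1) : ℝ≥0∞) = (V⁻¹) ^ (((k:ℝ) + 1)) := by
          rw [← ENNReal.rpow_natCast]; norm_num
        rw [this, ← hqn, hqr, ENNReal.rpow_add r 1 hVinv0 hVinvt, ENNReal.rpow_one]
      rw [h3]
      calc (V⁻¹) ^ r * V⁻¹ * (W ^ r * L) = (V⁻¹) ^ r * W ^ r * (V⁻¹ * L) := by ring
        _ ≤ 𝔄 ^ r := h2 ▸ h1
    have hcm : ENNReal.ofReal (c m ^ (k + 1)) =
        ENNReal.ofReal (b m ^ (k + 1)) * (V⁻¹) ^ (k + 1) * W ^ r := by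
      have hIrw : ENNReal.ofReal (((∫ x in gridCell N z m, w x) ^ (1 / p)) ^ (k + 1)) =
          W ^ r := by
        rw [ENNReal.ofReal_pow (Real.rpow_nonneg (hI0 m) _),
          ← ENNReal.ofReal_rpow_of_nonneg (hI0 m) (by positivity : (0:ℝ) ≤ 1 / p), hIW,
          ← ENNReal.rpow_natCast (W ^ (1 / p)) (k + 1), ← ENNReal.rpow_mul]
        congr 1
        push_cast
        rw [← hqn]
        exact hpq
      have hVrw : ENNReal.ofReal ((V.toReal⁻¹) ^ (k + 1)) = (V⁻¹) ^ (k + 1) := by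
        rw [ENNReal.ofReal_pow (by positivity)]
        congr 1
        rw [← ENNReal.toReal_inv, ENNReal.ofReal_toReal (ENNReal.inv_ne_top.mpr (hV0 m))]
      have hc' : c m ^ (k + 1) = b m ^ (k + 1) * (V.toReal⁻¹) ^ (k + 1) *
          ((∫ x in gridCell N z m, w x) ^ (1 / p)) ^ (k + 1) := by
        rw [hcdef]
        simp only [div_eq_mul_inv]
        rw [← hVdef]
        ring
      rw [hc', ENNReal.ofReal_mul (mul_nonneg (pow_nonneg (hb m) _) (by positivity)),
        ENNReal.ofReal_mul (pow_nonneg (hb m) _), hIrw, hVrw]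
    calc ENNReal.ofReal (c m ^ (k + 1)) * L
        = ENNReal.ofReal (b m ^ (k + 1)) * ((V⁻¹) ^ (k + 1) * (W ^ r * L)) := by
          rw [hcm]; ring
      _ ≤ ENNReal.ofReal (b m ^ (k + 1)) * 𝔄 ^ r := mul_le_mul_right hkey _
  -- sum up
  have hsum : ∑ m ∈ S, ENNReal.ofReal (c m ^ (k + 1)) *
      (∫⁻ y in ℓ m, ENNReal.ofReal (w y) ^ (1 - q)) ≤ 𝔄 ^ r := by
    refine le_trans (Finset.sum_le_sum hterm) ?_
    rw [← Finset.sum_mul, ← ENNReal.ofReal_sum_of_nonneg (fun m _ => pow_nonneg (hb m) _)]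
    have hbsum' : ∑ m ∈ S, b m ^ (k + 1) = 1 := by
      rw [← hbsum]
      refine Finset.sum_congr rfl fun m _ => ?_
      rw [hqn]
      rw [show ((k:ℝ) + 1) = ((k + 1 : ℕ) : ℝ) by push_cast; ring, Real.rpow_natCast]
    rw [hbsum', ENNReal.ofReal_one, one_mul]
  refine le_trans (mul_le_mul_right hsum _) ?_
  -- final scalar computation
  have hscal : ENNReal.ofReal K ^ k =
      ENNReal.ofReal (A ^ (1 / p) * ((N:ℝ)⁻¹) ^ (-(5:ℝ) / (4 * p))) ^ q := by
    have hCpos : (0:ℝ) < A ^ (1 / p) * ((N:ℝ)⁻¹) ^ (-(5:ℝ) / (4 * p)) := by positivity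
    rw [← ENNReal.ofReal_pow hK0.le, ENNReal.ofReal_rpow_of_nonneg hCpos.le hq0.le]
    congr 1
    have h1 : K ^ k = A ^ (k:ℝ) * ((N:ℝ)⁻¹) ^ (-(5:ℝ) / 4 * (k:ℝ)) := by
      rw [hKdef, mul_pow, ← Real.rpow_natCast A k,
        ← Real.rpow_natCast (((N:ℝ)⁻¹) ^ (-(5:ℝ) / 4)) k, ← Real.rpow_mul hδpos.le]
    have h2 : (A ^ (1 / p) * ((N:ℝ)⁻¹) ^ (-(5:ℝ) / (4 * p))) ^ q =
        A ^ (1 / p * q) * ((N:ℝ)⁻¹) ^ (-(5:ℝ) / (4 * p) * q) := by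
      rw [Real.mul_rpow (Real.rpow_nonneg hA.le _) (Real.rpow_nonneg hδpos.le _),
        ← Real.rpow_mul hA.le, ← Real.rpow_mul hδpos.le]
    have he : -(5:ℝ) / 4 * r = -(5:ℝ) / (4 * p) * q := by
      rw [hrdef, hqdef]
      field_simp
    rw [h1, h2, hpq, hkr, he]
  have hRq : R ^ q = ENNReal.ofReal K ^ k * 𝔄 ^ r := by
    rw [hRdef, ENNReal.mul_rpow_of_nonneg _ _ hq0.le, ← hscal, ← ENNReal.rpow_mul, hpq]
  exact le_of_eq hRq.symm

end
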